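/- Let (Ω, A, P) be a probability space, (S, 𝔖) and (T, 𝔗) measurable spaces, and (X, Y) : Ω → S × T measurable. Assume the joint law P_{(X,Y)} is absolutely continuous with respect to the product of the marginals P_X ⊗ P_Y, with Radon–Nikodým derivative g = dP_{(X,Y)}/d(P_X ⊗ P_Y) essentially bounded: ‖g‖_{∞, P_X⊗P_Y} < ∞. Let H be a separable Hilbert space with norm ‖·‖, and let F : S × T → H be measurable and square-integrable with respect to the product measure, ‖F‖²_{2, P_X⊗P_Y} = ∫ ‖F(x,y)‖² d(P_X ⊗ P_Y)(x,y) < ∞. Then ‖∫_{S×T} F dP_{(X,Y)} − ∫_{S×T} F d(P_X ⊗ P_Y)‖ ≤ 2^{1/2} (1 + ‖g‖_{∞, P_X⊗P_Y})^{1/2} ‖F‖_{2, P_X⊗P_Y} β(X,Y)^{1/2}. -/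

import Mathlib

open MeasureTheory Filter
open scoped ENNReal

noncomputable section

theorem stmt_19
    {Ω S T : Type*} [MeasurableSpace Ω] [MeasurableSpace S] [MeasurableSpace T]
    (P : Measure Ω) [IsProbabilityMeasure P]
    (X : Ω → S) (Y : Ω → T) (hX : Measurable X) (hY : Measurable Y)
    {H : Type*} [NormedAddCommGroup H] [InnerProductSpace ℝ H] [CompleteSpace H]
    [SecondCountableTopology H] [MeasurableSpace H] [BorelSpace H]
    (F : S × T → H) (hF : Measurable F)
    (g : S × T → ℝ) (hg : Measurable g) (hg0 : ∀ p, 0 ≤ g p)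
    (hjoint : P.map (fun ω => (X ω, Y ω)) =
      ((P.map X).prod (P.map Y)).withDensity fun p => ENNReal.ofReal (g p))
    (Cg : ℝ) (hCg : ∀ᵐ p ∂(P.map X).prod (P.map Y), |g p| ≤ Cg)
    (hF2 : Integrable (fun p => ‖F p‖ ^ 2) ((P.map X).prod (P.map Y)))
    (β : ℝ) (hβ : β = 1 / 2 * ∫ p, |g p - 1| ∂(P.map X).prod (P.map Y)) :
    ‖(∫ p, F p ∂P.map fun ω => (X ω, Y ω)) - ∫ p, F p ∂(P.map X).prod (P.map Y)‖ ≤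
      Real.sqrt 2 * (1 + Cg) ^ ((1 : ℝ) / 2) *
        (∫ p, ‖F p‖ ^ 2 ∂(P.map X).prod (P.map Y)) ^ ((1 : ℝ) / 2) * β ^ ((1 : ℝ) / 2) := by
  set μ : Measure (S × T) := (P.map X).prod (P.map Y) with hμ
  have hPX : IsProbabilityMeasure (P.map X) := Measure.isProbabilityMeasure_map hX.aemeasurable
  have hPY : IsProbabilityMeasure (P.map Y) := Measure.isProbabilityMeasure_map hY.aemeasurable
  have hμprob : IsProbabilityMeasure μ := by infer_instance
  -- Cg ≥ 0
  have hCg0 : 0 ≤ Cg := by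
    obtain ⟨p, hp⟩ := hCg.exists
    exact le_trans (abs_nonneg _) hp
  -- F is in L² hence integrable
  have hFmem : MemLp F 2 μ :=
    (memLp_two_iff_integrable_sq_norm hF.aestronglyMeasurable).2 hF2
  have hFi : Integrable F μ := hFmem.integrable (by norm_num)
  -- |g - 1| is integrable
  have hgm1 : Integrable (fun p => |g p - 1|) μ := by
    refine Integrable.mono' (integrable_const (Cg + 1)) (hg.sub measurable_const).abs.aestronglyMeasurable ?_
    filter_upwards [hCg] with p hp
    rw [Real.norm_eq_abs, abs_abs]
    calc |g p - 1| ≤ |g p| + 1 := by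
          simpa using abs_sub (g p) 1
      _ ≤ Cg + 1 := by linarith
  -- g • F is integrable
  have hgF : Integrable (fun p => g p • F p) μ := by
    refine Integrable.mono' (hFi.norm.const_mul Cg) (hg.aestronglyMeasurable.smul hF.aestronglyMeasurable) ?_
    filter_upwards [hCg] with p hp
    rw [norm_smul, Real.norm_eq_abs]
    exact mul_le_mul_of_nonneg_right hp (norm_nonneg _)
  -- |g-1| * ‖F‖² is integrable
  have hD : Integrable (fun p => |g p - 1| * ‖F p‖ ^ 2) μ := by
    refine Integrable.mono' (hF2.const_mul (Cg + 1)) ((hg.sub measurable_const).abs.aestronglyMeasurable.mul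
      ((hF.norm.pow_const 2).aestronglyMeasurable)) ?_
    filter_upwards [hCg] with p hp
    rw [Real.norm_eq_abs, abs_mul, abs_abs, abs_of_nonneg (by positivity : (0:ℝ) ≤ ‖F p‖ ^ 2)]
    refine mul_le_mul_of_nonneg_right ?_ (by positivity)
    calc |g p - 1| ≤ |g p| + 1 := by simpa using abs_sub (g p) 1
      _ ≤ Cg + 1 := by linarith
  -- step 1: the integral over the joint law
  have h1 : (∫ p, F p ∂P.map fun ω => (X ω, Y ω)) = ∫ p, g p • F p ∂μ := by
    rw [hjoint]
    have hmeas : Measurable fun p => (g p).toNNReal := hg.real_toNNReal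
    have : (fun p => ENNReal.ofReal (g p)) = fun p => ((g p).toNNReal : ℝ≥0∞) := rfl
    rw [this, integral_withDensity_eq_integral_smul hmeas]
    refine integral_congr_ae (Filter.Eventually.of_forall fun p => ?_)
    simp [NNReal.smul_def, Real.coe_toNNReal _ (hg0 p)]
  -- step 2: difference of integrals
  have h2 : (∫ p, g p • F p ∂μ) - ∫ p, F p ∂μ = ∫ p, (g p - 1) • F p ∂μ := by
    rw [← integral_sub hgF hFi]
    refine integral_congr_ae (Filter.Eventually.of_forall fun p => ?_)
    simp [sub_smul]
  -- step 3: norm bound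
  have h3 : ‖∫ p, (g p - 1) • F p ∂μ‖ ≤ ∫ p, |g p - 1| * ‖F p‖ ∂μ := by
    refine le_trans (norm_integral_le_integral_norm _) (le_of_eq ?_)
    refine integral_congr_ae (Filter.Eventually.of_forall fun p => ?_)
    show ‖(g p - 1) • F p‖ = |g p - 1| * ‖F p‖
    rw [norm_smul, Real.norm_eq_abs]
  -- Cauchy-Schwarz
  set f1 : S × T → ℝ := fun p => Real.sqrt |g p - 1| with hf1
  set f2 : S × T → ℝ := fun p => Real.sqrt |g p - 1| * ‖F p‖ with hf2
  have hconj : (2:ℝ).HolderConjugate 2 := Real.HolderConjugate.two_two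
  have hf1mem : MemLp f1 (ENNReal.ofReal 2) μ := by
    rw [show ENNReal.ofReal 2 = 2 by norm_num]
    refine (memLp_two_iff_integrable_sq
      ((hg.sub measurable_const).abs.sqrt.aestronglyMeasurable)).2 ?_
    refine hgm1.congr (Filter.Eventually.of_forall fun p => ?_)
    exact (Real.sq_sqrt (abs_nonneg _)).symm
  have hf2mem : MemLp f2 (ENNReal.ofReal 2) μ := by
    rw [show ENNReal.ofReal 2 = 2 by norm_num]
    refine (memLp_two_iff_integrable_sq
      (((hg.sub measurable_const).abs.sqrt.mul hF.norm).aestronglyMeasurable)).2 ?_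
    refine hD.congr (Filter.Eventually.of_forall fun p => ?_)
    show |g p - 1| * ‖F p‖ ^ 2 = (Real.sqrt |g p - 1| * ‖F p‖) ^ 2
    rw [mul_pow, Real.sq_sqrt (abs_nonneg _)]
  have hCS := integral_mul_le_Lp_mul_Lq_of_nonneg hconj
    (Filter.Eventually.of_forall fun p => Real.sqrt_nonneg _)
    (Filter.Eventually.of_forall fun p => mul_nonneg (Real.sqrt_nonneg _) (norm_nonneg _))
    hf1mem hf2mem
  have hprod : (∫ p, f1 p * f2 p ∂μ) = ∫ p, |g p - 1| * ‖F p‖ ∂μ := by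
    refine integral_congr_ae (Filter.Eventually.of_forall fun p => ?_)
    show Real.sqrt |g p - 1| * (Real.sqrt |g p - 1| * ‖F p‖) = |g p - 1| * ‖F p‖
    rw [← mul_assoc, Real.mul_self_sqrt (abs_nonneg _)]
  have hsq1 : (∫ p, f1 p ^ (2:ℝ) ∂μ) = ∫ p, |g p - 1| ∂μ := by
    refine integral_congr_ae (Filter.Eventually.of_forall fun p => ?_)
    show Real.sqrt |g p - 1| ^ (2:ℝ) = |g p - 1|
    rw [Real.rpow_two, Real.sq_sqrt (abs_nonneg _)]
  have hsq2 : (∫ p, f2 p ^ (2:ℝ) ∂μ) = ∫ p, |g p - 1| * ‖F p‖ ^ 2 ∂μ := by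
    refine integral_congr_ae (Filter.Eventually.of_forall fun p => ?_)
    show (Real.sqrt |g p - 1| * ‖F p‖) ^ (2:ℝ) = |g p - 1| * ‖F p‖ ^ 2
    rw [Real.rpow_two, mul_pow, Real.sq_sqrt (abs_nonneg _)]
  rw [hprod, hsq1, hsq2] at hCS
  -- bound the weighted L² norm
  have hDA : (∫ p, |g p - 1| * ‖F p‖ ^ 2 ∂μ) ≤ (1 + Cg) * ∫ p, ‖F p‖ ^ 2 ∂μ := by
    rw [← integral_const_mul]
    refine integral_mono_ae hD (hF2.const_mul (1 + Cg)) ?_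
    filter_upwards [hCg] with p hp
    refine mul_le_mul_of_nonneg_right ?_ (by positivity)
    calc |g p - 1| ≤ |g p| + 1 := by simpa using abs_sub (g p) 1
      _ ≤ 1 + Cg := by linarith
  -- nonnegativity facts
  have hA0 : 0 ≤ ∫ p, ‖F p‖ ^ 2 ∂μ := integral_nonneg fun p => by positivity
  have hB0 : 0 ≤ ∫ p, |g p - 1| ∂μ := integral_nonneg fun p => abs_nonneg _
  have hβ0 : 0 ≤ β := by rw [hβ]; positivity
  have hβ2 : (∫ p, |g p - 1| ∂μ) = 2 * β := by rw [hβ]; ring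
  -- combine
  calc ‖(∫ p, F p ∂P.map fun ω => (X ω, Y ω)) - ∫ p, F p ∂μ‖
      = ‖∫ p, (g p - 1) • F p ∂μ‖ := by rw [h1, h2]
    _ ≤ ∫ p, |g p - 1| * ‖F p‖ ∂μ := h3
    _ ≤ (∫ p, |g p - 1| ∂μ) ^ ((1:ℝ)/2) * (∫ p, |g p - 1| * ‖F p‖ ^ 2 ∂μ) ^ ((1:ℝ)/2) := hCS
    _ ≤ (2 * β) ^ ((1:ℝ)/2) * ((1 + Cg) * ∫ p, ‖F p‖ ^ 2 ∂μ) ^ ((1:ℝ)/2) := by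
        rw [← hβ2]
        refine mul_le_mul_of_nonneg_left ?_ (Real.rpow_nonneg hB0 _)
        exact Real.rpow_le_rpow (integral_nonneg fun p =>
          mul_nonneg (abs_nonneg _) (by positivity)) hDA (by norm_num)
    _ = Real.sqrt 2 * (1 + Cg) ^ ((1:ℝ)/2) * (∫ p, ‖F p‖ ^ 2 ∂μ) ^ ((1:ℝ)/2) * β ^ ((1:ℝ)/2) := by
        rw [Real.mul_rpow (by norm_num) hβ0, Real.mul_rpow (by linarith) hA0,
          Real.sqrt_eq_rpow]
        ring
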